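/- Let f, g be arbitrary positive Gamma-ratio coefficients: fix α, β, β' > 0 with β' < β and B ≥ 0, and suppose both series F(z) = Σ_{k≥0} c_k z^k / Γ(β + kB) and G(z) = Σ_{k≥0} c_k z^k / Γ(β' + kB), with c_k > 0, converge for all z > 0. Then F(z)/G(z) is decreasing in z on (0, ∞). -/

import Mathlib

open Real

lemma four_pt {f : ℝ → ℝ} (hf : ConvexOn ℝ (Set.Ioi 0) f) {a b c d : ℝ}
    (ha : 0 < a) (hab : a ≤ b) (hbd : b ≤ d) (hac : a ≤ c) (hcd : c ≤ d)
    (hsum : a + d = b + c) : f b + f c ≤ f a + f d := by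
  rcases eq_or_lt_of_le (hab.trans hbd) with h | had
  · have hb : b = a := le_antisymm (by linarith) hab
    have hc : c = a := le_antisymm (by linarith) hac
    rw [hb, hc, ← h]
  · have ha' : a ∈ Set.Ioi (0:ℝ) := ha
    have hd' : d ∈ Set.Ioi (0:ℝ) := lt_of_lt_of_le ha (hab.trans hbd)
    have hda : 0 < d - a := by linarith
    have key : ∀ u, a ≤ u → u ≤ d →
        f u ≤ (d - u)/(d - a) * f a + (u - a)/(d - a) * f d := by
      intro u h1 h2
      have hw : (d - u)/(d - a) + (u - a)/(d - a) = 1 := by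
        rw [← add_div, div_eq_one_iff_eq hda.ne']; ring
      have hcomb := hf.2 ha' hd' (div_nonneg (by linarith : (0:ℝ) ≤ d - u) hda.le)
        (div_nonneg (by linarith : (0:ℝ) ≤ u - a) hda.le) hw
      have hpt : (d - u)/(d - a) * a + (u - a)/(d - a) * d = u := by
        field_simp; ring
      simpa [smul_eq_mul, hpt] using hcomb
    have h1 := key b hab hbd
    have h2 := key c hac hcd
    have heq : (d - b)/(d - a) * f a + (b - a)/(d - a) * f d
        + ((d - c)/(d - a) * f a + (c - a)/(d - a) * f d) = f a + f d := by
      field_simp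
      linear_combination (f a - f d) * hsum * (1:ℝ)
    linarith [h1, h2, heq.le, heq.ge]

lemma gamma_four {β β' s t : ℝ} (hβ' : 0 < β') (hββ : β' < β) (hs : 0 ≤ s) (hst : s ≤ t) :
    Real.Gamma (β + s) * Real.Gamma (β' + t) ≤ Real.Gamma (β' + s) * Real.Gamma (β + t) := by
  have h1 : 0 < β' + s := by linarith
  have h2 : 0 < β + s := by linarith
  have h3 : 0 < β' + t := by linarith
  have h4 : 0 < β + t := by linarith
  have key := four_pt Real.convexOn_log_Gamma (a := β' + s) (b := β + s) (c := β' + t)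
    (d := β + t) h1 (by linarith) (by linarith) (by linarith) (by linarith) (by ring)
  simp only [Function.comp_apply] at key
  have g1 := Real.Gamma_pos_of_pos h1
  have g2 := Real.Gamma_pos_of_pos h2
  have g3 := Real.Gamma_pos_of_pos h3
  have g4 := Real.Gamma_pos_of_pos h4
  rw [← Real.log_mul g2.ne' g3.ne', ← Real.log_mul g1.ne' g4.ne'] at key
  exact (Real.log_le_log_iff (mul_pos g2 g3) (mul_pos g1 g4)).1 key

theorem series_ratio_antitone (c : ℕ → ℝ) (β β' B : ℝ) (hc : ∀ k, 0 < c k)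
    (hβ' : 0 < β') (hββ : β' < β) (hB : 0 ≤ B)
    (hF : ∀ z : ℝ, 0 < z → Summable (fun k : ℕ => c k * z ^ k / Real.Gamma (β + k * B)))
    (hG : ∀ z : ℝ, 0 < z → Summable (fun k : ℕ => c k * z ^ k / Real.Gamma (β' + k * B))) :
    AntitoneOn (fun z : ℝ =>
      (∑' k : ℕ, c k * z ^ k / Real.Gamma (β + k * B)) /
        (∑' k : ℕ, c k * z ^ k / Real.Gamma (β' + k * B))) (Set.Ioi 0) := by
  have hβ : 0 < β := hβ'.trans hββ
  set a : ℝ → ℕ → ℝ := fun z k => c k * z ^ k / Real.Gamma (β + k * B) with ha_def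
  set b : ℝ → ℕ → ℝ := fun z k => c k * z ^ k / Real.Gamma (β' + k * B) with hb_def
  have hkB : ∀ k : ℕ, (0:ℝ) ≤ k * B := fun k => mul_nonneg (Nat.cast_nonneg k) hB
  have hGA : ∀ k : ℕ, 0 < Real.Gamma (β + k * B) := fun k =>
    Real.Gamma_pos_of_pos (by linarith [hkB k])
  have hHA : ∀ k : ℕ, 0 < Real.Gamma (β' + k * B) := fun k =>
    Real.Gamma_pos_of_pos (by linarith [hkB k])
  have ha_nn : ∀ z : ℝ, 0 ≤ z → ∀ k, 0 ≤ a z k := fun z hz k =>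
    div_nonneg (mul_nonneg (hc k).le (pow_nonneg hz k)) (hGA k).le
  have hb_nn : ∀ z : ℝ, 0 ≤ z → ∀ k, 0 ≤ b z k := fun z hz k =>
    div_nonneg (mul_nonneg (hc k).le (pow_nonneg hz k)) (hHA k).le
  -- termwise key inequality for k ≤ l
  have key : ∀ x y : ℝ, 0 < x → 0 < y → x ≤ y → ∀ k l : ℕ, k ≤ l →
      a y k * b x l + a y l * b x k ≤ a x k * b y l + a x l * b y k := by
    intro x y hx hy hxy k l hkl
    have hGam : Real.Gamma (β + k * B) * Real.Gamma (β' + l * B) ≤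
        Real.Gamma (β' + k * B) * Real.Gamma (β + l * B) :=
      gamma_four hβ' hββ (hkB k)
        (mul_le_mul_of_nonneg_right (Nat.cast_le.2 hkl) hB)
    set GA := Real.Gamma (β + k * B)
    set GB := Real.Gamma (β + l * B)
    set HA := Real.Gamma (β' + k * B)
    set HB := Real.Gamma (β' + l * B)
    have hPQ : (GB * HA)⁻¹ ≤ (GA * HB)⁻¹ := by
      apply inv_anti₀ (mul_pos (hGA k) (hHA l))
      calc GA * HB ≤ HA * GB := hGam
        _ = GB * HA := mul_comm _ _
    obtain ⟨m, rfl⟩ : ∃ m, l = k + m := ⟨l - k, (Nat.add_sub_cancel' hkl).symm⟩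
    have huv : y ^ k * x ^ (k + m) ≤ x ^ k * y ^ (k + m) := by
      have h1 : y ^ k * x ^ (k + m) = (x * y) ^ k * x ^ m := by
        rw [pow_add, mul_pow]; ring
      have h2 : x ^ k * y ^ (k + m) = (x * y) ^ k * y ^ m := by
        rw [pow_add, mul_pow]; ring
      rw [h1, h2]
      exact mul_le_mul_of_nonneg_left (pow_le_pow_left₀ hx.le hxy m)
        (pow_nonneg (mul_pos hx hy).le k)
    have e1 : a y k * b x (k + m) = (c k * c (k + m)) * ((y ^ k * x ^ (k + m)) * (GA * HB)⁻¹) := by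
      simp only [ha_def, hb_def, div_eq_mul_inv, mul_inv]; ring
    have e2 : a y (k + m) * b x k = (c k * c (k + m)) * ((x ^ k * y ^ (k + m)) * (GB * HA)⁻¹) := by
      simp only [ha_def, hb_def, div_eq_mul_inv, mul_inv]; ring
    have e3 : a x k * b y (k + m) = (c k * c (k + m)) * ((x ^ k * y ^ (k + m)) * (GA * HB)⁻¹) := by
      simp only [ha_def, hb_def, div_eq_mul_inv, mul_inv]; ring
    have e4 : a x (k + m) * b y k = (c k * c (k + m)) * ((y ^ k * x ^ (k + m)) * (GB * HA)⁻¹) := by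
      simp only [ha_def, hb_def, div_eq_mul_inv, mul_inv]; ring
    rw [e1, e2, e3, e4]
    have hcc : (0:ℝ) ≤ c k * c (k + m) := (mul_pos (hc k) (hc (k + m))).le
    nlinarith [mul_nonneg hcc (mul_nonneg (sub_nonneg.2 huv) (sub_nonneg.2 hPQ))]
  -- termwise inequality for all pairs
  have key' : ∀ x y : ℝ, 0 < x → 0 < y → x ≤ y → ∀ p : ℕ × ℕ,
      a y p.1 * b x p.2 + a y p.2 * b x p.1 ≤ a x p.1 * b y p.2 + a x p.2 * b y p.1 := by
    intro x y hx hy hxy ⟨k, l⟩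
    rcases le_total k l with h | h
    · exact key x y hx hy hxy k l h
    · have := key x y hx hy hxy l k h
      dsimp only
      linarith
  intro x hx y hy hxy
  simp only [Set.mem_Ioi] at hx hy
  simp only
  have hGx : 0 < ∑' k, b x k :=
    Summable.tsum_pos (hG x hx) (hb_nn x hx.le) 0
      (div_pos (by simpa using hc 0) (hHA 0))
  have hGy : 0 < ∑' k, b y k :=
    Summable.tsum_pos (hG y hy) (hb_nn y hy.le) 0
      (div_pos (by simpa using hc 0) (hHA 0))
  rw [div_le_div_iff₀ hGy hGx]
  -- product summabilities
  have hS1 : Summable (fun p : ℕ × ℕ => a y p.1 * b x p.2) :=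
    (hF y hy).mul_of_nonneg (hG x hx) (ha_nn y hy.le) (hb_nn x hx.le)
  have hS1' : Summable (fun p : ℕ × ℕ => a y p.2 * b x p.1) := by
    have := (hG x hx).mul_of_nonneg (hF y hy) (hb_nn x hx.le) (ha_nn y hy.le)
    exact this.congr fun p => mul_comm _ _
  have hS2 : Summable (fun p : ℕ × ℕ => a x p.1 * b y p.2) :=
    (hF x hx).mul_of_nonneg (hG y hy) (ha_nn x hx.le) (hb_nn y hy.le)
  have hS2' : Summable (fun p : ℕ × ℕ => a x p.2 * b y p.1) := by
    have := (hG y hy).mul_of_nonneg (hF x hx) (hb_nn y hy.le) (ha_nn x hx.le)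
    exact this.congr fun p => mul_comm _ _
  -- tsum over product = product of tsums
  have hprod : ∀ (u v : ℝ), Summable (fun p : ℕ × ℕ => a u p.1 * b v p.2) →
      (∑' p : ℕ × ℕ, a u p.1 * b v p.2) = (∑' k, a u k) * (∑' k, b v k) := by
    intro u v hsum
    rw [Summable.tsum_prod hsum]
    simp_rw [tsum_mul_left]
    rw [tsum_mul_right]
  -- swap identities
  have hswap1 : (∑' p : ℕ × ℕ, a y p.2 * b x p.1) = ∑' p : ℕ × ℕ, a y p.1 * b x p.2 :=
    (Equiv.prodComm ℕ ℕ).tsum_eq (fun p : ℕ × ℕ => a y p.1 * b x p.2)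
  have hswap2 : (∑' p : ℕ × ℕ, a x p.2 * b y p.1) = ∑' p : ℕ × ℕ, a x p.1 * b y p.2 :=
    (Equiv.prodComm ℕ ℕ).tsum_eq (fun p : ℕ × ℕ => a x p.1 * b y p.2)
  have hmain : (∑' p : ℕ × ℕ, a y p.1 * b x p.2) ≤ ∑' p : ℕ × ℕ, a x p.1 * b y p.2 := by
    have hsum_le : (∑' p : ℕ × ℕ, (a y p.1 * b x p.2 + a y p.2 * b x p.1)) ≤
        ∑' p : ℕ × ℕ, (a x p.1 * b y p.2 + a x p.2 * b y p.1) :=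
      Summable.tsum_le_tsum (key' x y hx hy hxy) (hS1.add hS1') (hS2.add hS2')
    rw [Summable.tsum_add hS1 hS1', Summable.tsum_add hS2 hS2', hswap1, hswap2] at hsum_le
    linarith
  calc (∑' k, a y k) * (∑' k, b x k) = ∑' p : ℕ × ℕ, a y p.1 * b x p.2 := (hprod y x hS1).symm
    _ ≤ ∑' p : ℕ × ℕ, a x p.1 * b y p.2 := hmain
    _ = (∑' k, a x k) * (∑' k, b y k) := hprod x y hS2
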